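/- For every admissible integer n, the transitive tournament TT_n admits a chain–collider–fork decomposition containing exactly ⌊n/4⌋ forks, exactly n(n−1)/4 − ⌊n/4⌋ colliders, and no chains. -/

import Mathlib

/-- The arc set of the transitive tournament `TT n` on vertices `Fin n`
(vertex `v_{i+1}` of the paper is index `i`): there is an arc `(i, j)` iff `i < j`. -/
def ttArcs (n : ℕ) : Finset (Fin n × Fin n) :=
  Finset.univ.filter fun p => p.1 < p.2

/-- A chain: a two-arc block `{(i,j), (j,k)}` with `i < j < k`. -/
def IsChainMotif {n : ℕ} (b : Finset (Fin n × Fin n)) : Prop :=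
  ∃ i j k : Fin n, i < j ∧ j < k ∧ b = {(i, j), (j, k)}

/-- A collider: a two-arc block `{(i,j), (k,j)}` with `i, k < j` and `i ≠ k`. -/
def IsColliderMotif {n : ℕ} (b : Finset (Fin n × Fin n)) : Prop :=
  ∃ i k j : Fin n, i < j ∧ k < j ∧ i ≠ k ∧ b = {(i, j), (k, j)}

/-- A fork: a two-arc block `{(i,j), (i,k)}` with `i < j`, `i < k` and `j ≠ k`. -/
def IsForkMotif {n : ℕ} (b : Finset (Fin n × Fin n)) : Prop :=
  ∃ i j k : Fin n, i < j ∧ i < k ∧ j ≠ k ∧ b = {(i, j), (i, k)}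

instance {n : ℕ} : DecidablePred (IsChainMotif (n := n)) := fun b => by
  unfold IsChainMotif; infer_instance

instance {n : ℕ} : DecidablePred (IsColliderMotif (n := n)) := fun b => by
  unfold IsColliderMotif; infer_instance

instance {n : ℕ} : DecidablePred (IsForkMotif (n := n)) := fun b => by
  unfold IsForkMotif; infer_instance

/-- `P` is a decomposition of the arc set of `TT n`: its blocks are pairwise
disjoint and their union is the whole arc set. -/
def IsTTDecomposition {n : ℕ} (P : Finset (Finset (Fin n × Fin n))) : Prop :=
  (P : Set (Finset (Fin n × Fin n))).PairwiseDisjoint id ∧ P.sup id = ttArcs n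

/-- `n` is admissible iff `n ≡ 0` or `1 (mod 4)`. -/
def Admissible (n : ℕ) : Prop := n % 4 = 0 ∨ n % 4 = 1


set_option linter.unnecessarySeqFocus false
set_option maxHeartbeats 1000000

/-- Partner map on ℕ-pairs realizing the pairing of arcs. -/
def ptr (a : ℕ × ℕ) : ℕ × ℕ :=
  if a.2 % 2 = 0 then
    (if a.1 % 2 = 0 then a.1 + 1 else a.1 - 1, a.2)
  else if a.1 = 0 then
    (0, if a.2 % 4 = 1 then a.2 + 2 else a.2 - 2)
  else
    (if a.1 % 2 = 1 then a.1 + 1 else a.1 - 1, a.2)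

lemma ptr_valid {n : ℕ} (hadm : n % 4 = 0 ∨ n % 4 = 1) (a : ℕ × ℕ)
    (h1 : a.1 < a.2) (h2 : a.2 < n) : (ptr a).1 < (ptr a).2 ∧ (ptr a).2 < n := by
  unfold ptr; split_ifs <;> simp <;> omega

lemma ptr_invol (a : ℕ × ℕ) (h1 : a.1 < a.2) : ptr (ptr a) = a := by
  obtain ⟨i, j⟩ := a
  unfold ptr
  split_ifs <;> simp_all [Prod.ext_iff] <;> omega

lemma ptr_ne (a : ℕ × ℕ) (h1 : a.1 < a.2) : ptr a ≠ a := by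
  obtain ⟨i, j⟩ := a
  unfold ptr
  split_ifs <;> simp_all [Prod.ext_iff] <;> omega

lemma ptr_collider (a : ℕ × ℕ) (h : ¬(a.2 % 2 = 1 ∧ a.1 = 0)) :
    (ptr a).2 = a.2 ∧ (ptr a).1 ≠ a.1 := by
  obtain ⟨i, j⟩ := a
  unfold ptr
  split_ifs <;> simp_all [Prod.ext_iff] <;> omega

lemma ptr_fork (a : ℕ × ℕ) (h : a.2 % 2 = 1) (h0 : a.1 = 0) :
    (ptr a).1 = 0 ∧ (ptr a).2 ≠ a.2 ∧ 0 < (ptr a).2 := by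
  obtain ⟨i, j⟩ := a
  unfold ptr
  split_ifs <;> simp_all [Prod.ext_iff] <;> omega

lemma ptr_fork1 (j : ℕ) (h : j % 4 = 1) : ptr (0, j) = (0, j + 2) := by
  unfold ptr; split_ifs <;> simp_all <;> omega

lemma ptr_fork3 (j : ℕ) (h : j % 4 = 3) : ptr (0, j) = (0, j - 2) := by
  unfold ptr; split_ifs <;> simp_all <;> omega

lemma mem_ttArcs {n : ℕ} {a : Fin n × Fin n} : a ∈ ttArcs n ↔ a.1 < a.2 := by
  simp [ttArcs]

/-- Partner map on arcs of `TT n`. -/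
def fptr {n : ℕ} (a : Fin n × Fin n) : Fin n × Fin n :=
  if h : (ptr (a.1.1, a.2.1)).1 < (ptr (a.1.1, a.2.1)).2 ∧ (ptr (a.1.1, a.2.1)).2 < n then
    (⟨(ptr (a.1.1, a.2.1)).1, h.1.trans h.2⟩, ⟨(ptr (a.1.1, a.2.1)).2, h.2⟩)
  else a

variable {n : ℕ}

lemma fptr_val (hadm : n % 4 = 0 ∨ n % 4 = 1) {a : Fin n × Fin n} (ha : a ∈ ttArcs n) :
    ((fptr a).1.1 = (ptr (a.1.1, a.2.1)).1) ∧ ((fptr a).2.1 = (ptr (a.1.1, a.2.1)).2) := by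
  rw [mem_ttArcs] at ha
  have := ptr_valid hadm (a.1.1, a.2.1) ha a.2.2
  rw [fptr, dif_pos this]
  exact ⟨rfl, rfl⟩

lemma fptr_mem (hadm : n % 4 = 0 ∨ n % 4 = 1) {a : Fin n × Fin n} (ha : a ∈ ttArcs n) :
    fptr a ∈ ttArcs n := by
  have hv := fptr_val hadm ha
  rw [mem_ttArcs] at ha ⊢
  have := ptr_valid hadm (a.1.1, a.2.1) ha a.2.2
  rw [Fin.lt_def]; omega

lemma fptr_fptr (hadm : n % 4 = 0 ∨ n % 4 = 1) {a : Fin n × Fin n} (ha : a ∈ ttArcs n) :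
    fptr (fptr a) = a := by
  have hv := fptr_val hadm ha
  have hv2 := fptr_val hadm (fptr_mem hadm ha)
  have hinv : ptr (ptr (a.1.1, a.2.1)) = (a.1.1, a.2.1) := ptr_invol _ (mem_ttArcs.mp ha)
  have heq : ((fptr a).1.1, (fptr a).2.1) = ptr (a.1.1, a.2.1) := by
    rw [Prod.ext_iff]; exact ⟨hv.1, hv.2⟩
  rw [heq, hinv] at hv2
  rw [Prod.ext_iff, Fin.ext_iff, Fin.ext_iff]
  exact hv2

lemma fptr_ne (hadm : n % 4 = 0 ∨ n % 4 = 1) {a : Fin n × Fin n} (ha : a ∈ ttArcs n) :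
    fptr a ≠ a := by
  have hv := fptr_val hadm ha
  have hne := ptr_ne (a.1.1, a.2.1) (mem_ttArcs.mp ha)
  intro h
  apply hne
  rw [Prod.ext_iff]
  rw [h] at hv
  exact ⟨hv.1.symm, hv.2.symm⟩

/-- The block containing arc `a`. -/
def blockOf {n : ℕ} (a : Fin n × Fin n) : Finset (Fin n × Fin n) := {a, fptr a}

lemma mem_blockOf {a x : Fin n × Fin n} : x ∈ blockOf a ↔ x = a ∨ x = fptr a := by
  simp [blockOf]

lemma blockOf_fptr (hadm : n % 4 = 0 ∨ n % 4 = 1) {a : Fin n × Fin n} (ha : a ∈ ttArcs n) :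
    blockOf (fptr a) = blockOf a := by
  unfold blockOf
  rw [fptr_fptr hadm ha, Finset.pair_comm]

lemma card_blockOf (hadm : n % 4 = 0 ∨ n % 4 = 1) {a : Fin n × Fin n} (ha : a ∈ ttArcs n) :
    (blockOf a).card = 2 :=
  Finset.card_pair (Ne.symm (fptr_ne hadm ha))

lemma blockOf_collider (hadm : n % 4 = 0 ∨ n % 4 = 1) {a : Fin n × Fin n} (ha : a ∈ ttArcs n)
    (h : ¬(a.2.1 % 2 = 1 ∧ a.1.1 = 0)) : IsColliderMotif (blockOf a) := by
  have hv := fptr_val hadm ha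
  have hc := ptr_collider (a.1.1, a.2.1) h
  have h2 : (fptr a).2 = a.2 := Fin.ext (by rw [hv.2]; exact hc.1)
  have hmem := mem_ttArcs.mp (fptr_mem hadm ha)
  refine ⟨a.1, (fptr a).1, a.2, mem_ttArcs.mp ha, ?_, ?_, ?_⟩
  · rw [← h2]; exact hmem
  · intro he
    apply hc.2
    rw [← hv.1, he]
  · show blockOf a = {(a.1, a.2), ((fptr a).1, a.2)}
    rw [blockOf]
    congr 1
    rw [← h2]

lemma blockOf_fork (hadm : n % 4 = 0 ∨ n % 4 = 1) {a : Fin n × Fin n} (ha : a ∈ ttArcs n)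
    (h2 : a.2.1 % 2 = 1) (h0 : a.1.1 = 0) : IsForkMotif (blockOf a) := by
  have hv := fptr_val hadm ha
  have hf := ptr_fork (a.1.1, a.2.1) h2 h0
  have h1 : (fptr a).1 = a.1 := Fin.ext (by rw [hv.1, hf.1, h0])
  refine ⟨a.1, a.2, (fptr a).2, mem_ttArcs.mp ha, ?_, ?_, ?_⟩
  · rw [Fin.lt_def, h0, hv.2]; exact hf.2.2
  · intro he
    apply hf.2.1
    rw [← hv.2, he]
  · show blockOf a = {(a.1, a.2), (a.1, (fptr a).2)}
    rw [blockOf]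
    congr 1
    rw [← h1]

lemma collider_fork_exclusive {b : Finset (Fin n × Fin n)}
    (hc : IsColliderMotif b) (hf : IsForkMotif b) : False := by
  obtain ⟨i, k, j, hij, hkj, hik, rfl⟩ := hc
  obtain ⟨x, y, z, hxy, hxz, hyz, hb⟩ := hf
  have h1 : (i, j) ∈ ({(x, y), (x, z)} : Finset (Fin n × Fin n)) := by rw [← hb]; simp
  have h2 : (k, j) ∈ ({(x, y), (x, z)} : Finset (Fin n × Fin n)) := by rw [← hb]; simp
  simp only [Finset.mem_insert, Finset.mem_singleton, Prod.mk.injEq] at h1 h2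
  rcases h1 with ⟨h, _⟩ | ⟨h, _⟩ <;> rcases h2 with ⟨h', _⟩ | ⟨h', _⟩ <;>
    exact hik (h.trans h'.symm)

lemma chain_collider_exclusive {b : Finset (Fin n × Fin n)}
    (hc : IsChainMotif b) (hf : IsColliderMotif b) : False := by
  obtain ⟨i, j, k, hij, hjk, rfl⟩ := hc
  obtain ⟨x, z, y, hxy, hzy, hxz, hb⟩ := hf
  have h1 : (i, j) ∈ ({(x, y), (z, y)} : Finset (Fin n × Fin n)) := by rw [← hb]; simp
  have h2 : (j, k) ∈ ({(x, y), (z, y)} : Finset (Fin n × Fin n)) := by rw [← hb]; simp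
  simp only [Finset.mem_insert, Finset.mem_singleton, Prod.mk.injEq] at h1 h2
  rcases h1 with ⟨_, h⟩ | ⟨_, h⟩ <;> rcases h2 with ⟨_, h'⟩ | ⟨_, h'⟩ <;>
    exact absurd (h.trans h'.symm) (ne_of_lt hjk)

lemma chain_fork_exclusive {b : Finset (Fin n × Fin n)}
    (hc : IsChainMotif b) (hf : IsForkMotif b) : False := by
  obtain ⟨i, j, k, hij, hjk, rfl⟩ := hc
  obtain ⟨x, y, z, hxy, hxz, hyz, hb⟩ := hf
  have h1 : (i, j) ∈ ({(x, y), (x, z)} : Finset (Fin n × Fin n)) := by rw [← hb]; simp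
  have h2 : (j, k) ∈ ({(x, y), (x, z)} : Finset (Fin n × Fin n)) := by rw [← hb]; simp
  simp only [Finset.mem_insert, Finset.mem_singleton, Prod.mk.injEq] at h1 h2
  rcases h1 with ⟨h, _⟩ | ⟨h, _⟩ <;> rcases h2 with ⟨h', _⟩ | ⟨h', _⟩ <;>
    exact absurd (h.trans h'.symm) (ne_of_lt hij)

/-- Indices of the distinguished fork arcs. -/
def forkIdx (n : ℕ) : Finset ℕ := (Finset.range n).filter (fun j => j % 4 = 1)

lemma card_forkIdx (n : ℕ) : (forkIdx n).card = (n + 2) / 4 := by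
  induction n with
  | zero => simp [forkIdx]
  | succ m ih =>
    rw [forkIdx, Finset.range_add_one, Finset.filter_insert]
    by_cases h : m % 4 = 1
    · rw [if_pos h, Finset.card_insert_of_notMem (by simp [Finset.mem_filter])]
      rw [← forkIdx, ih]
      omega
    · rw [if_neg h, ← forkIdx, ih]
      omega

/-- The fork block associated to index `j`. -/
def gblk (n : ℕ) (j : ℕ) : Finset (Fin n × Fin n) :=
  if h : j % 4 = 1 ∧ j + 2 < n then
    blockOf ((⟨0, by omega⟩ : Fin n), (⟨j, by omega⟩ : Fin n))
  else ∅

lemma gblk_spec (hadm : n % 4 = 0 ∨ n % 4 = 1) {j : ℕ} (h1 : j % 4 = 1) (h2 : j < n) :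
    ∃ a : Fin n × Fin n, a ∈ ttArcs n ∧ a.1.1 = 0 ∧ a.2.1 = j ∧ gblk n j = blockOf a := by
  have hcond : j % 4 = 1 ∧ j + 2 < n := ⟨h1, by omega⟩
  refine ⟨((⟨0, by omega⟩ : Fin n), (⟨j, by omega⟩ : Fin n)), ?_, rfl, rfl, ?_⟩
  · rw [mem_ttArcs]; exact Fin.mk_lt_mk.mpr (by omega)
  · rw [gblk, dif_pos hcond]

theorem tt_collider_fork_decomposition (n : ℕ) (hadm : Admissible n) :
    ∃ P : Finset (Finset (Fin n × Fin n)),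
      IsTTDecomposition P ∧ (∀ b ∈ P, IsChainMotif b ∨ IsColliderMotif b ∨ IsForkMotif b) ∧
      (P.filter IsForkMotif).card = n / 4 ∧
      (P.filter IsColliderMotif).card = n * (n - 1) / 4 - n / 4 ∧
      (P.filter IsChainMotif).card = 0 := by
  have hadm' : n % 4 = 0 ∨ n % 4 = 1 := hadm
  set P : Finset (Finset (Fin n × Fin n)) := (ttArcs n).image blockOf with hP
  have hPmem : ∀ b : Finset (Fin n × Fin n), b ∈ P ↔ ∃ a ∈ ttArcs n, blockOf a = b := by
    intro b; simp [hP, Finset.mem_image]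
  have hkey : ∀ a ∈ ttArcs n, ∀ x ∈ blockOf a, blockOf x = blockOf a := by
    intro a ha x hx
    rcases mem_blockOf.mp hx with rfl | rfl
    · rfl
    · exact blockOf_fptr hadm' ha
  have hsub : ∀ a ∈ ttArcs n, blockOf a ⊆ ttArcs n := by
    intro a ha x hx
    rcases mem_blockOf.mp hx with rfl | rfl
    · exact ha
    · exact fptr_mem hadm' ha
  have hdisj : (P : Set (Finset (Fin n × Fin n))).PairwiseDisjoint id := by
    intro b1 hb1 b2 hb2 hne
    simp only [Finset.mem_coe] at hb1 hb2
    obtain ⟨a1, ha1, rfl⟩ := (hPmem b1).mp hb1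
    obtain ⟨a2, ha2, rfl⟩ := (hPmem b2).mp hb2
    simp only [Function.onFun, id]
    rw [Finset.disjoint_left]
    intro x hx1 hx2
    exact hne ((hkey a1 ha1 x hx1).symm.trans (hkey a2 ha2 x hx2))
  have hsup : P.sup id = ttArcs n := by
    apply le_antisymm
    · apply Finset.sup_le
      intro b hb
      obtain ⟨a, ha, rfl⟩ := (hPmem b).mp hb
      exact hsub a ha
    · intro x hx
      rw [Finset.mem_sup]
      exact ⟨blockOf x, (hPmem _).mpr ⟨x, hx, rfl⟩, Finset.mem_insert_self _ _⟩
  have hclass : ∀ b ∈ P, IsColliderMotif b ∨ IsForkMotif b := by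
    intro b hb
    obtain ⟨a, ha, rfl⟩ := (hPmem b).mp hb
    by_cases h : a.2.1 % 2 = 1 ∧ a.1.1 = 0
    · exact Or.inr (blockOf_fork hadm' ha h.1 h.2)
    · exact Or.inl (blockOf_collider hadm' ha h)
  have hchain : P.filter IsChainMotif = ∅ := by
    rw [Finset.filter_eq_empty_iff]
    intro b hb hc
    rcases hclass b hb with h | h
    · exact chain_collider_exclusive hc h
    · exact chain_fork_exclusive hc h
  have hfork : P.filter IsForkMotif = (forkIdx n).image (gblk n) := by
    ext b
    constructor
    · intro hb
      rw [Finset.mem_filter] at hb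
      obtain ⟨hbP, hf⟩ := hb
      obtain ⟨a, ha, rfl⟩ := (hPmem _).mp hbP
      have hcase : a.2.1 % 2 = 1 ∧ a.1.1 = 0 := by
        by_contra h
        exact collider_fork_exclusive (blockOf_collider hadm' ha h) hf
      rw [Finset.mem_image]
      have hj4 : a.2.1 % 4 = 1 ∨ a.2.1 % 4 = 3 := by omega
      rcases hj4 with hj4 | hj4
      · obtain ⟨a', ha', h0', hj', hg⟩ := gblk_spec hadm' hj4 a.2.isLt
        have hae : a' = a := by
          rw [Prod.ext_iff, Fin.ext_iff, Fin.ext_iff]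
          exact ⟨by rw [h0', hcase.2], hj'⟩
        refine ⟨a.2.1, ?_, ?_⟩
        · rw [forkIdx, Finset.mem_filter, Finset.mem_range]
          exact ⟨a.2.isLt, hj4⟩
        · rw [hg, hae]
      · have hlt : a.2.1 - 2 < n := by have := a.2.isLt; omega
        obtain ⟨a', ha', h0', hj', hg⟩ :=
          gblk_spec hadm' (show (a.2.1 - 2) % 4 = 1 by omega) hlt
        have hv := fptr_val hadm' ha
        have hp3 : ptr (a.1.1, a.2.1) = (0, a.2.1 - 2) := by
          rw [hcase.2]
          exact ptr_fork3 _ hj4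
        have hae : a' = fptr a := by
          rw [Prod.ext_iff, Fin.ext_iff, Fin.ext_iff]
          constructor
          · rw [h0', hv.1, hp3]
          · rw [hj', hv.2, hp3]
        refine ⟨a.2.1 - 2, ?_, ?_⟩
        · rw [forkIdx, Finset.mem_filter, Finset.mem_range]
          exact ⟨hlt, by omega⟩
        · rw [hg, hae, blockOf_fptr hadm' ha]
    · intro hb
      rw [Finset.mem_image] at hb
      obtain ⟨j, hj, rfl⟩ := hb
      rw [forkIdx, Finset.mem_filter, Finset.mem_range] at hj
      obtain ⟨a, ha, h0, hjv, hg⟩ := gblk_spec hadm' hj.2 hj.1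
      rw [Finset.mem_filter, hg]
      refine ⟨(hPmem _).mpr ⟨a, ha, rfl⟩, blockOf_fork hadm' ha ?_ h0⟩
      omega
  have hforkcard : (P.filter IsForkMotif).card = n / 4 := by
    rw [hfork, Finset.card_image_of_injOn, card_forkIdx]
    · omega
    · intro j hj j' hj' he
      simp only [Finset.mem_coe] at hj hj'
      rw [forkIdx, Finset.mem_filter, Finset.mem_range] at hj hj'
      obtain ⟨a, ha, h0, hjv, hg⟩ := gblk_spec hadm' hj.2 hj.1
      obtain ⟨a', ha', h0', hjv', hg'⟩ := gblk_spec hadm' hj'.2 hj'.1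
      have hmem : a ∈ blockOf a' := by
        rw [← hg', ← he, hg]
        exact Finset.mem_insert_self _ _
      rcases mem_blockOf.mp hmem with h | h
      · rw [← hjv, ← hjv', h]
      · have hv := fptr_val hadm' ha'
        have hp : ptr (a'.1.1, a'.2.1) = (0, a'.2.1 + 2) := by
          rw [h0']
          exact ptr_fork1 _ (by omega)
        have hcontr : a.2.1 = a'.2.1 + 2 := by rw [h, hv.2, hp]
        omega
  have hcard2 : ∀ b ∈ P, b.card = 2 := by
    intro b hb
    obtain ⟨a, ha, rfl⟩ := (hPmem b).mp hb
    exact card_blockOf hadm' ha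
  have hsumc : (ttArcs n).card = 2 * P.card := by
    have h1 : (ttArcs n).card = ∑ b ∈ P, b.card := by
      conv_lhs => rw [← hsup, Finset.sup_eq_biUnion]
      exact Finset.card_biUnion
        (fun x hx y hy hxy => hdisj (Finset.mem_coe.mpr hx) (Finset.mem_coe.mpr hy) hxy)
    rw [h1, Finset.sum_congr rfl hcard2, Finset.sum_const, smul_eq_mul, mul_comm]
  have harcs : (ttArcs n).card * 2 = n * (n - 1) := by
    have hbu : ttArcs n = Finset.univ.biUnion
        (fun j : Fin n => Finset.Iio j ×ˢ ({j} : Finset (Fin n))) := by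
      ext p
      simp only [mem_ttArcs, Finset.mem_biUnion, Finset.mem_univ, true_and,
        Finset.mem_product, Finset.mem_Iio, Finset.mem_singleton]
      constructor
      · intro h; exact ⟨p.2, h, rfl⟩
      · rintro ⟨j, h, rfl⟩; exact h
    rw [hbu, Finset.card_biUnion]
    · have hc : ∀ j : Fin n, (Finset.Iio j ×ˢ ({j} : Finset (Fin n))).card = j.1 := by
        intro j
        rw [Finset.card_product, Fin.card_Iio, Finset.card_singleton, mul_one]
      rw [Finset.sum_congr rfl (fun j _ => hc j)]
      have hsr : Finset.univ.sum Fin.val = ∑ i ∈ Finset.range n, i :=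
        Fin.sum_univ_eq_sum_range (fun i => i) n
      rw [hsr]
      exact Finset.sum_range_id_mul_two n
    · intro x _ y _ hxy
      rw [Function.onFun, Finset.disjoint_left]
      rintro p hp hp'
      rw [Finset.mem_product, Finset.mem_singleton] at hp hp'
      exact hxy (hp.2.symm.trans hp'.2)
  obtain ⟨k, hk⟩ : ∃ k, n * (n - 1) = 4 * k := by
    rcases hadm' with h | h
    · obtain ⟨m, hm⟩ : ∃ m, n = 4 * m := ⟨n / 4, by omega⟩
      exact ⟨m * (n - 1), by rw [hm]; ring⟩
    · obtain ⟨m, hm⟩ : ∃ m, n - 1 = 4 * m := ⟨(n - 1) / 4, by omega⟩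
      exact ⟨n * m, by rw [hm]; ring⟩
  have hPcard : P.card = k := by
    have h2 := harcs
    rw [hk] at h2
    omega
  have hcoll : (P.filter IsColliderMotif).card = n * (n - 1) / 4 - n / 4 := by
    have hne : P.filter IsColliderMotif = P.filter (fun b => ¬ IsForkMotif b) := by
      ext b
      simp only [Finset.mem_filter]
      constructor
      · rintro ⟨hb, hc⟩
        exact ⟨hb, fun hf => collider_fork_exclusive hc hf⟩
      · rintro ⟨hb, hnf⟩
        rcases hclass b hb with h | h
        · exact ⟨hb, h⟩
        · exact absurd h hnf
    have hsplit := Finset.card_filter_add_card_filter_not (s := P) (p := IsForkMotif)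
    rw [hne, hk]
    omega
  refine ⟨P, ⟨hdisj, hsup⟩, ?_, hforkcard, hcoll, by rw [hchain]; simp⟩
  intro b hb
  rcases hclass b hb with h | h
  · exact Or.inr (Or.inl h)
  · exact Or.inr (Or.inr h)
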